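/- With the fixed-s orthogonal family setup, for every n ≥ 2 one has (1/s)·b_{n−1} = −C_n·(B_{n−1} − C_{n−1}) − h_n/h_{n−1}, where b_{n−1} is the coefficient of z^{n−1} in p_n. -/

import Mathlib

set_option maxHeartbeats 1000000
open Polynomial Metric

noncomputable def wInt (s : ℝ) (f g : Polynomial ℂ) : ℂ :=
  ∮ z in C(0, 1), f.eval z * g.eval z⁻¹ * Complex.exp (s * (z + z⁻¹)) / z

lemma wCont (s : ℝ) (f g : Polynomial ℂ) :
    ContinuousOn (fun z : ℂ => f.eval z * g.eval z⁻¹ * Complex.exp (s * (z + z⁻¹)) / z)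
      (sphere (0:ℂ) 1) := by
  intro z hz
  have hz0 : z ≠ 0 := by
    intro h; rw [h] at hz; simp at hz
  exact ContinuousAt.continuousWithinAt (by fun_prop (disch := exact hz0))

lemma wIntegrable (s : ℝ) (f g : Polynomial ℂ) :
    CircleIntegrable (fun z : ℂ => f.eval z * g.eval z⁻¹ * Complex.exp (s * (z + z⁻¹)) / z)
      0 1 :=
  (wCont s f g).circleIntegrable (by norm_num)

lemma circleIntegral_add {f g : ℂ → ℂ} {c : ℂ} {R : ℝ}
    (hf : CircleIntegrable f c R) (hg : CircleIntegrable g c R) :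
    (∮ z in C(c, R), f z + g z) = (∮ z in C(c, R), f z) + ∮ z in C(c, R), g z := by
  simp only [circleIntegral, smul_add, intervalIntegral.integral_add hf.out hg.out]

lemma wInt_add_left (s : ℝ) (f f' g : Polynomial ℂ) :
    wInt s (f + f') g = wInt s f g + wInt s f' g := by
  unfold wInt
  rw [← circleIntegral_add (wIntegrable s f g) (wIntegrable s f' g)]
  congr 1; funext z; rw [eval_add]; ring

lemma wInt_sub_left (s : ℝ) (f f' g : Polynomial ℂ) :
    wInt s (f - f') g = wInt s f g - wInt s f' g := by
  unfold wInt
  rw [← circleIntegral.integral_sub (wIntegrable s f g) (wIntegrable s f' g)]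
  congr 1; funext z; rw [eval_sub]; ring

lemma wInt_Cmul_left (s : ℝ) (c : ℂ) (f g : Polynomial ℂ) :
    wInt s (C c * f) g = c * wInt s f g := by
  unfold wInt
  rw [← circleIntegral.integral_const_mul]
  congr 1; funext z; rw [eval_mul, eval_C]; ring

lemma wInt_add_right (s : ℝ) (f g g' : Polynomial ℂ) :
    wInt s f (g + g') = wInt s f g + wInt s f g' := by
  unfold wInt
  rw [← circleIntegral_add (wIntegrable s f g) (wIntegrable s f g')]
  congr 1; funext z; rw [eval_add]; ring

lemma wInt_sub_right (s : ℝ) (f g g' : Polynomial ℂ) :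
    wInt s f (g - g') = wInt s f g - wInt s f g' := by
  unfold wInt
  rw [← circleIntegral.integral_sub (wIntegrable s f g) (wIntegrable s f g')]
  congr 1; funext z; rw [eval_sub]; ring

lemma wInt_Cmul_right (s : ℝ) (c : ℂ) (f g : Polynomial ℂ) :
    wInt s f (C c * g) = c * wInt s f g := by
  unfold wInt
  rw [← circleIntegral.integral_const_mul]
  congr 1; funext z; rw [eval_mul, eval_C]; ring

lemma wKey (s : ℝ) (f g : Polynomial ℂ) :
    wInt s (X * derivative f) g - wInt s f (X * derivative g)
      + (s : ℂ) * (wInt s (X * f) g - wInt s f (X * g)) = 0 := by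
  set fA : ℂ → ℂ := fun z => (X * derivative f).eval z * g.eval z⁻¹ * Complex.exp (s * (z + z⁻¹)) / z with hfA
  set fB : ℂ → ℂ := fun z => f.eval z * (X * derivative g).eval z⁻¹ * Complex.exp (s * (z + z⁻¹)) / z with hfB
  set fC : ℂ → ℂ := fun z => (X * f).eval z * g.eval z⁻¹ * Complex.exp (s * (z + z⁻¹)) / z with hfC
  set fD : ℂ → ℂ := fun z => f.eval z * (X * g).eval z⁻¹ * Complex.exp (s * (z + z⁻¹)) / z with hfD
  have hA : CircleIntegrable fA 0 1 := wIntegrable s (X * derivative f) g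
  have hB : CircleIntegrable fB 0 1 := wIntegrable s f (X * derivative g)
  have hC : CircleIntegrable fC 0 1 := wIntegrable s (X * f) g
  have hD : CircleIntegrable fD 0 1 := wIntegrable s f (X * g)
  have cA : ContinuousOn fA (sphere (0:ℂ) 1) := wCont s (X * derivative f) g
  have cB : ContinuousOn fB (sphere (0:ℂ) 1) := wCont s f (X * derivative g)
  have cC : ContinuousOn fC (sphere (0:ℂ) 1) := wCont s (X * f) g
  have cD : ContinuousOn fD (sphere (0:ℂ) 1) := wCont s f (X * g)
  have hzero : (∮ z in C(0, 1), (fA z - fB z + (s : ℂ) * (fC z - fD z))) = 0 := by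
    apply circleIntegral.integral_eq_zero_of_hasDerivWithinAt (f := fun z : ℂ =>
      f.eval z * g.eval z⁻¹ * Complex.exp (s * (z + z⁻¹))) (by norm_num : (0:ℝ) ≤ 1)
    intro z hz
    have hz0 : z ≠ 0 := by intro h; rw [h] at hz; simp at hz
    have hinv : HasDerivAt (fun w : ℂ => w⁻¹) (-(z ^ 2)⁻¹) z := hasDerivAt_inv hz0
    have h1 : HasDerivAt (fun w : ℂ => f.eval w) ((derivative f).eval z) z := f.hasDerivAt z
    have h2 : HasDerivAt (fun w : ℂ => g.eval w⁻¹) ((derivative g).eval z⁻¹ * (-(z ^ 2)⁻¹)) z :=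
      (g.hasDerivAt z⁻¹).comp z hinv
    have h3 : HasDerivAt (fun w : ℂ => (s : ℂ) * (w + w⁻¹)) ((s : ℂ) * (1 + -(z ^ 2)⁻¹)) z :=
      ((hasDerivAt_id z).add hinv).const_mul _
    have h4 : HasDerivAt (fun w : ℂ => Complex.exp ((s : ℂ) * (w + w⁻¹)))
        (Complex.exp ((s : ℂ) * (z + z⁻¹)) * ((s : ℂ) * (1 + -(z ^ 2)⁻¹))) z :=
      (Complex.hasDerivAt_exp _).comp z h3
    have hF := (h1.mul h2).mul h4
    apply HasDerivAt.hasDerivWithinAt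
    convert hF using 1
    · rfl
    · rfl
    simp only [hfA, hfB, hfC, hfD, eval_mul, eval_X, Pi.mul_apply]
    field_simp
    ring
  have hsubAB : CircleIntegrable (fun z => fA z - fB z) 0 1 :=
    (cA.sub cB).circleIntegrable (by norm_num)
  have hsCD : CircleIntegrable (fun z => (s : ℂ) * (fC z - fD z)) 0 1 :=
    (continuousOn_const.mul (cC.sub cD)).circleIntegrable (by norm_num)
  rw [circleIntegral_add hsubAB hsCD, circleIntegral.integral_sub hA hB,
      circleIntegral.integral_const_mul, circleIntegral.integral_sub hC hD] at hzero
  exact hzero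

/-- Lemma 5 (ii): `(1/s)·b_{n−1} = −C_n·(B_{n−1} − C_{n−1}) − h_n/h_{n−1}` for `n ≥ 2`. -/
theorem stmt_11 (s : ℝ) (hs : 0 < s)
    (p : ℕ → Polynomial ℂ)
    (hmonic : ∀ n, (p n).Monic)
    (hdeg : ∀ n, (p n).natDegree = n)
    (hreal : ∀ n k, ((p n).coeff k).im = 0)
    (hp0 : ∀ n, (p n).coeff 0 ≠ 0)
    (horth : ∀ n m, n ≠ m →
      (∮ z in C(0, 1), (p n).eval z * (p m).eval z⁻¹ *
        Complex.exp (s * (z + z⁻¹)) / z) = 0)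
    (h : ℕ → ℂ)
    (hh : ∀ n, h n = ∮ z in C(0, 1), (p n).eval z * (p n).eval z⁻¹ *
        Complex.exp (s * (z + z⁻¹)) / z)
    (hne : ∀ n, h n ≠ 0)
    (Bn Cn : ℕ → ℂ)
    (hB : ∀ n, Bn n = -((p (n + 1)).coeff 0 / (p n).coeff 0))
    (hC : ∀ n, 1 ≤ n → Cn n = Bn n * h n / h (n - 1))
    (hrec : ∀ n, 1 ≤ n →
      Polynomial.X * (p n + Polynomial.C (Cn n) * p (n - 1)) =
        p (n + 1) + Polynomial.C (Bn n) * p n)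
    (n : ℕ) (hn : 2 ≤ n) :
    (1 / (s : ℂ)) * (p n).coeff (n - 1) =
      -(Cn n) * (Bn (n - 1) - Cn (n - 1)) - h n / h (n - 1) := by
  obtain ⟨m, rfl⟩ : ∃ m, n = m + 2 := ⟨n - 2, by omega⟩
  have hI : ∀ a b : ℕ, a ≠ b → wInt s (p a) (p b) = 0 := fun a b hab => horth a b hab
  have hIh : ∀ a : ℕ, wInt s (p a) (p a) = h a := fun a => (hh a).symm
  have hp1 : p 0 = 1 := by
    have := hdeg 0
    exact ((hmonic 0).natDegree_eq_zero).mp this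
  -- degenerate-degree orthogonality, left slot
  have left0 : ∀ d, ∀ q : Polynomial ℂ, q.natDegree ≤ d → ∀ k, d < k → wInt s q (p k) = 0 := by
    intro d
    induction d with
    | zero =>
      intro q hq k hk
      have hq' : q = C (q.coeff 0) * p 0 := by
        rw [hp1, mul_one]; exact Polynomial.eq_C_of_natDegree_le_zero hq
      rw [hq', wInt_Cmul_left, hI 0 k (by omega), mul_zero]
    | succ d ih =>
      intro q hq k hk
      have hr : (q - C (q.coeff (d+1)) * p (d+1)).natDegree ≤ d := by
        apply Polynomial.natDegree_le_iff_coeff_eq_zero.mpr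
        intro j hj
        rw [coeff_sub, coeff_C_mul]
        rcases eq_or_lt_of_le (Nat.succ_le_of_lt hj) with hj1 | hj1
        · rw [← hj1]
          have h1 : (p (d+1)).coeff (d+1) = 1 := by
            have := (hmonic (d+1)).coeff_natDegree; rwa [hdeg] at this
          rw [h1, mul_one, sub_self]
        · have h1 : q.coeff j = 0 := coeff_eq_zero_of_natDegree_lt (lt_of_le_of_lt hq hj1)
          have h2 : (p (d+1)).coeff j = 0 := coeff_eq_zero_of_natDegree_lt (by rw [hdeg]; exact hj1)
          rw [h1, h2, mul_zero, sub_zero]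
      have h0 := ih (q - C (q.coeff (d+1)) * p (d+1)) hr k (by omega)
      have hq' : q = (q - C (q.coeff (d+1)) * p (d+1)) + C (q.coeff (d+1)) * p (d+1) := by ring
      rw [hq', wInt_add_left, h0, wInt_Cmul_left, hI (d+1) k (by omega), mul_zero, add_zero]
  -- right slot
  have right0 : ∀ d, ∀ q : Polynomial ℂ, q.natDegree ≤ d → ∀ k, d < k → wInt s (p k) q = 0 := by
    intro d
    induction d with
    | zero =>
      intro q hq k hk
      have hq' : q = C (q.coeff 0) * p 0 := by
        rw [hp1, mul_one]; exact Polynomial.eq_C_of_natDegree_le_zero hq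
      rw [hq', wInt_Cmul_right, hI k 0 (by omega), mul_zero]
    | succ d ih =>
      intro q hq k hk
      have hr : (q - C (q.coeff (d+1)) * p (d+1)).natDegree ≤ d := by
        apply Polynomial.natDegree_le_iff_coeff_eq_zero.mpr
        intro j hj
        rw [coeff_sub, coeff_C_mul]
        rcases eq_or_lt_of_le (Nat.succ_le_of_lt hj) with hj1 | hj1
        · rw [← hj1]
          have h1 : (p (d+1)).coeff (d+1) = 1 := by
            have := (hmonic (d+1)).coeff_natDegree; rwa [hdeg] at this
          rw [h1, mul_one, sub_self]
        · have h1 : q.coeff j = 0 := coeff_eq_zero_of_natDegree_lt (lt_of_le_of_lt hq hj1)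
          have h2 : (p (d+1)).coeff j = 0 := coeff_eq_zero_of_natDegree_lt (by rw [hdeg]; exact hj1)
          rw [h1, h2, mul_zero, sub_zero]
      have h0 := ih (q - C (q.coeff (d+1)) * p (d+1)) hr k (by omega)
      have hq' : q = (q - C (q.coeff (d+1)) * p (d+1)) + C (q.coeff (d+1)) * p (d+1) := by ring
      rw [hq', wInt_add_right, h0, wInt_Cmul_right, hI k (d+1) (by omega), mul_zero, add_zero]
  have left0' : ∀ (q : Polynomial ℂ) (k : ℕ), q.natDegree < k → wInt s q (p k) = 0 :=
    fun q k hk => left0 q.natDegree q le_rfl k hk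
  have right0' : ∀ (q : Polynomial ℂ) (k : ℕ), q.natDegree < k → wInt s (p k) q = 0 :=
    fun q k hk => right0 q.natDegree q le_rfl k hk
  -- monic difference
  have hmo : ∀ j : ℕ, (X * p j - p (j+1)).natDegree ≤ j := by
    intro j
    apply Polynomial.natDegree_le_iff_coeff_eq_zero.mpr
    intro k hk
    obtain ⟨k', rfl⟩ : ∃ k', k = k' + 1 := ⟨k - 1, by omega⟩
    rw [coeff_sub, coeff_X_mul]
    rcases eq_or_lt_of_le (by omega : j ≤ k') with hj1 | hj1
    · rw [← hj1]
      have h1 : (p j).coeff j = 1 := by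
        have := (hmonic j).coeff_natDegree; rwa [hdeg] at this
      have h2 : (p (j+1)).coeff (j+1) = 1 := by
        have := (hmonic (j+1)).coeff_natDegree; rwa [hdeg] at this
      rw [h1, h2, sub_self]
    · have h1 : (p j).coeff k' = 0 := coeff_eq_zero_of_natDegree_lt (by rw [hdeg]; exact hj1)
      have h2 : (p (j+1)).coeff (k'+1) = 0 := coeff_eq_zero_of_natDegree_lt (by rw [hdeg]; omega)
      rw [h1, h2, sub_self]
  -- bracket ⟨p_{m+2}, z p_{m+1}⟩ = h_{m+2}
  have hd : wInt s (p (m+2)) (X * p (m+1)) = h (m+2) := by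
    have e : X * p (m+1) = p (m+2) + (X * p (m+1) - p (m+2)) := by ring
    rw [e, wInt_add_right, hIh, right0' _ _ (lt_of_le_of_lt (hmo (m+1)) (by omega)), add_zero]
  -- bracket ⟨z p_m, p_{m+1}⟩ = h_{m+1}
  have hK : wInt s (X * p m) (p (m+1)) = h (m+1) := by
    have e : X * p m = p (m+1) + (X * p m - p (m+1)) := by ring
    rw [e, wInt_add_left, hIh, left0' _ _ (lt_of_le_of_lt (hmo m) (by omega)), add_zero]
  -- recursion rearrangements
  have e1 : X * p (m+1) = p (m+2) + C (Bn (m+1)) * p (m+1) - C (Cn (m+1)) * (X * p m) := by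
    have h0 := hrec (m+1) (by omega)
    simp only [Nat.add_sub_cancel, show m+1+1 = m+2 from rfl] at h0
    linear_combination h0
  have e2 : X * p (m+2) = p (m+3) + C (Bn (m+2)) * p (m+2) - C (Cn (m+2)) * (X * p (m+1)) := by
    have h0 := hrec (m+2) (by omega)
    simp only [show m+2-1 = m+1 from rfl, show m+2+1 = m+3 from rfl] at h0
    linear_combination h0
  have hJ : wInt s (X * p (m+1)) (p (m+1)) = (Bn (m+1) - Cn (m+1)) * h (m+1) := by
    rw [e1, wInt_sub_left, wInt_add_left, wInt_Cmul_left, wInt_Cmul_left,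
      hI (m+2) (m+1) (by omega), hIh, hK]
    ring
  have hc : wInt s (X * p (m+2)) (p (m+1))
      = -Cn (m+2) * ((Bn (m+1) - Cn (m+1)) * h (m+1)) := by
    rw [e2, wInt_sub_left, wInt_add_left, wInt_Cmul_left, wInt_Cmul_left,
      hI (m+3) (m+1) (by omega), hI (m+2) (m+1) (by omega), hJ]
    ring
  -- ⟨z p_n', p_{n-1}⟩ = -β h_{n-1}
  have hrdeg : (X * derivative (p (m+2)) - C ((m:ℂ)+2) * p (m+2)
      + C ((p (m+2)).coeff (m+1)) * p (m+1)).natDegree ≤ m := by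
    apply Polynomial.natDegree_le_iff_coeff_eq_zero.mpr
    intro k hk
    obtain ⟨k', rfl⟩ : ∃ k', k = k' + 1 := ⟨k - 1, by omega⟩
    rw [coeff_add, coeff_sub, coeff_X_mul, coeff_derivative, coeff_C_mul, coeff_C_mul]
    have trich : k' = m ∨ k' = m + 1 ∨ m + 2 ≤ k' := by omega
    rcases trich with he | he | hk2
    · rw [he]
      have h1 : (p (m+1)).coeff (m+1) = 1 := by
        have := (hmonic (m+1)).coeff_natDegree; rwa [hdeg] at this
      rw [h1]
      push_cast
      ring
    · rw [he]
      have h1 : (p (m+2)).coeff (m+2) = 1 := by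
        have := (hmonic (m+2)).coeff_natDegree; rwa [hdeg] at this
      have h2 : (p (m+1)).coeff (m+2) = 0 := coeff_eq_zero_of_natDegree_lt (by rw [hdeg]; omega)
      rw [show m+1+1 = m+2 from rfl, h1, h2]
      push_cast
      ring
    · have h1 : (p (m+2)).coeff (k'+1) = 0 := coeff_eq_zero_of_natDegree_lt (by rw [hdeg]; omega)
      have h2 : (p (m+1)).coeff (k'+1) = 0 := coeff_eq_zero_of_natDegree_lt (by rw [hdeg]; omega)
      rw [h1, h2]
      ring
  have ha : wInt s (X * derivative (p (m+2))) (p (m+1))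
      = -((p (m+2)).coeff (m+1)) * h (m+1) := by
    have e3 : X * derivative (p (m+2))
        = (X * derivative (p (m+2)) - C ((m:ℂ)+2) * p (m+2)
            + C ((p (m+2)).coeff (m+1)) * p (m+1))
          + C ((m:ℂ)+2) * p (m+2) - C ((p (m+2)).coeff (m+1)) * p (m+1) := by ring
    rw [e3, wInt_sub_left, wInt_add_left, wInt_Cmul_left, wInt_Cmul_left,
      left0' _ _ (lt_of_le_of_lt hrdeg (by omega)), hI (m+2) (m+1) (by omega), hIh]
    ring
  -- ⟨p_n, z p_{n-1}'⟩ = 0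
  have hbdeg : (X * derivative (p (m+1))).natDegree ≤ m+1 := by
    apply Polynomial.natDegree_le_iff_coeff_eq_zero.mpr
    intro k hk
    obtain ⟨k', rfl⟩ : ∃ k', k = k' + 1 := ⟨k - 1, by omega⟩
    rw [coeff_X_mul, coeff_derivative]
    have h1 : (p (m+1)).coeff (k'+1) = 0 := coeff_eq_zero_of_natDegree_lt (by rw [hdeg]; omega)
    rw [h1, zero_mul]
  have hb : wInt s (p (m+2)) (X * derivative (p (m+1))) = 0 :=
    right0' _ _ (lt_of_le_of_lt hbdeg (by omega))
  -- assemble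
  have hkey := wKey s (p (m+2)) (p (m+1))
  rw [ha, hb, hc, hd] at hkey
  have hs0 : (s : ℂ) ≠ 0 := Complex.ofReal_ne_zero.mpr (ne_of_gt hs)
  have hh1 : h (m+1) ≠ 0 := hne (m+1)
  simp only [show m+2-1 = m+1 from rfl]
  field_simp
  linear_combination (-(1:ℂ)) * hkey
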